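/- Let T be a tree on n vertices with diameter at least 3. Then the largest distance eigenvalue satisfies λ₁(D(T)) ≥ 2n − 2 − 4/n; in particular λ₁(D(T)) > 2n − 3. -/

import Mathlib

open Finset SimpleGraph
open Matrix

/-- The distance matrix of a simple graph on `Fin n`, as a real matrix: the
`(i,j)` entry is the graph distance `d_G(i,j)`. -/
noncomputable def distMatrix {n : ℕ} (G : SimpleGraph (Fin n)) :
    Matrix (Fin n) (Fin n) ℝ :=
  fun i j => (G.dist i j : ℝ)

/-- The eigenvalues of the distance matrix, listed in decreasing order. -/
noncomputable def distEigList {n : ℕ} (G : SimpleGraph (Fin n)) : List ℝ :=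
  if h : (distMatrix G).IsHermitian then
    (List.ofFn h.eigenvalues).insertionSort (· ≥ ·)
  else []

/-- `distEig G k` is the `k`-th largest distance eigenvalue `λ_k(D(G))` (`1`-indexed). -/
noncomputable def distEig {n : ℕ} (G : SimpleGraph (Fin n)) (k : ℕ) : ℝ :=
  (distEigList G).getD (k - 1) 0

/-- `S_k(D(G))`, the sum of the `k` largest distance eigenvalues. -/
noncomputable def distEigSum {n : ℕ} (G : SimpleGraph (Fin n)) (k : ℕ) : ℝ :=
  ((distEigList G).take k).sum

/-- `G` has independence number at most `s`: every set of pairwise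
nonadjacent vertices has at most `s` elements. -/
def IndepNumLE {V : Type*} (G : SimpleGraph V) (s : ℕ) : Prop :=
  ∀ S : Finset V, (∀ u ∈ S, ∀ v ∈ S, u ≠ v → ¬ G.Adj u v) → S.card ≤ s

lemma distMatrix_isHermitian {n : ℕ} (G : SimpleGraph (Fin n)) :
    (distMatrix G).IsHermitian := by
  unfold Matrix.IsHermitian
  ext i j
  simp [distMatrix, Matrix.conjTranspose_apply, SimpleGraph.dist_comm]

lemma rayleigh {n : ℕ} {A : Matrix (Fin n) (Fin n) ℝ} (hA : A.IsHermitian) {μ : ℝ}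
    (hμ : ∀ i, hA.eigenvalues i ≤ μ) (x : Fin n → ℝ) :
    x ⬝ᵥ (A *ᵥ x) ≤ μ * (x ⬝ᵥ x) := by
  have hspec := hA.spectral_theorem
  set U : Matrix (Fin n) (Fin n) ℝ := (hA.eigenvectorUnitary : Matrix (Fin n) (Fin n) ℝ) with hU
  have hUU : U * star U = 1 := by
    exact (Matrix.mem_unitaryGroup_iff).mp (hA.eigenvectorUnitary).2
  set y : Fin n → ℝ := star U *ᵥ x with hy
  have hdot : ∀ z : Fin n → ℝ, x ⬝ᵥ (U *ᵥ z) = y ⬝ᵥ z := by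
    intro z
    rw [Matrix.dotProduct_mulVec, hy, Matrix.star_eq_conjTranspose,
      Matrix.conjTranspose_eq_transpose_of_trivial, Matrix.mulVec_transpose]
  have hyy : y ⬝ᵥ y = x ⬝ᵥ x := by
    have : U *ᵥ y = x := by
      rw [hy, Matrix.mulVec_mulVec, hUU, Matrix.one_mulVec]
    calc y ⬝ᵥ y = x ⬝ᵥ (U *ᵥ y) := (hdot y).symm
    _ = x ⬝ᵥ x := by rw [this]
  have hAx : x ⬝ᵥ (A *ᵥ x) = ∑ i, hA.eigenvalues i * (y i * y i) := by
    have hdiag : Matrix.diagonal ((RCLike.ofReal : ℝ → ℝ) ∘ hA.eigenvalues) = Matrix.diagonal hA.eigenvalues := by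
      ext i j; by_cases h : i = j <;> simp [h]
    have : A *ᵥ x = U *ᵥ (Matrix.diagonal hA.eigenvalues *ᵥ y) := by
      rw [hy, Matrix.mulVec_mulVec, Matrix.mulVec_mulVec, ← hdiag]
      conv_lhs => rw [hspec]
      rfl
    rw [this, hdot]
    simp [Matrix.mulVec_diagonal, dotProduct, mul_comm, mul_assoc, mul_left_comm]
  rw [hAx, ← hyy]
  have : μ * (y ⬝ᵥ y) = ∑ i, μ * (y i * y i) := by
    simp [dotProduct, Finset.mul_sum]
  rw [this]
  apply Finset.sum_le_sum
  intro i _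
  have h1 : 0 ≤ y i * y i := mul_self_nonneg _
  exact mul_le_mul_of_nonneg_right (hμ i) h1

lemma sorted_head_ge {l : List ℝ} (hs : l.Pairwise (· ≥ ·)) {x : ℝ} (hx : x ∈ l) :
    x ≤ l.getD 0 0 := by
  cases l with
  | nil => simp at hx
  | cons a t =>
    rcases List.mem_cons.mp hx with h | h
    · simp [h]
    · exact List.rel_of_pairwise_cons hs h

lemma eigen_le_distEig {n : ℕ} (G : SimpleGraph (Fin n)) (i : Fin n) :
    (distMatrix_isHermitian G).eigenvalues i ≤ distEig G 1 := by
  have h := distMatrix_isHermitian G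
  rw [distEig, distEigList, dif_pos h]
  apply sorted_head_ge (List.pairwise_insertionSort _ _)
  rw [(List.perm_insertionSort _ _).mem_iff]
  exact List.mem_ofFn.mpr ⟨i, rfl⟩

lemma rayleigh_distEig {n : ℕ} (G : SimpleGraph (Fin n)) (x : Fin n → ℝ) :
    x ⬝ᵥ (distMatrix G *ᵥ x) ≤ distEig G 1 * (x ⬝ᵥ x) :=
  rayleigh (distMatrix_isHermitian G) (fun i => eigen_le_distEig G i) x



lemma no_path2_adj {n : ℕ} {T : SimpleGraph (Fin n)} (hT : T.IsTree) {u x v : Fin n}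
    (h1 : T.Adj u x) (h2 : T.Adj x v) (h3 : T.Adj u v) : False := by
  obtain ⟨P, _, hPu⟩ := hT.existsUnique_path u v
  have hP1 : (SimpleGraph.Walk.cons h3 SimpleGraph.Walk.nil : T.Walk u v).IsPath := by
    simp [SimpleGraph.Walk.isPath_def, h3.ne]
  have hP2 : (SimpleGraph.Walk.cons h1 (SimpleGraph.Walk.cons h2 SimpleGraph.Walk.nil) :
      T.Walk u v).IsPath := by
    simp [SimpleGraph.Walk.isPath_def, h1.ne, h2.ne, h3.ne]
  have := (hPu _ hP1).trans (hPu _ hP2).symm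
  have hlen := congrArg SimpleGraph.Walk.length this
  simp at hlen

lemma adj_of_mem_support_short {n : ℕ} {T : SimpleGraph (Fin n)} {u v : Fin n}
    (p : T.Walk u v) (hp : p.length ≤ 2) {b : Fin n} (hb : b ∈ p.support)
    (hbu : b ≠ u) (hbv : b ≠ v) : T.Adj u b := by
  cases p with
  | nil =>
    simp only [SimpleGraph.Walk.support_nil, List.mem_singleton] at hb
    exact absurd hb hbu
  | cons h q =>
    rename_i x
    cases q with
    | nil =>
      simp only [SimpleGraph.Walk.support_cons, SimpleGraph.Walk.support_nil] at hb
      simp only [List.mem_cons, List.mem_singleton] at hb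
      rcases hb with rfl | rfl | h'
      · exact absurd rfl hbu
      · exact absurd rfl hbv
      · simp at h'
    | cons h' r =>
      rename_i y
      cases r with
      | nil =>
        simp only [SimpleGraph.Walk.support_cons, SimpleGraph.Walk.support_nil] at hb
        simp only [List.mem_cons, List.mem_singleton] at hb
        rcases hb with rfl | rfl | rfl | h'
        · exact absurd rfl hbu
        · exact h
        · exact absurd rfl hbv
        · simp at h'
      | cons h'' s =>
        exfalso
        simp [SimpleGraph.Walk.length_cons] at hp

lemma tree_key {n : ℕ} {T : SimpleGraph (Fin n)} (hT : T.IsTree) {a b c d : Fin n}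
    (hab : T.Adj a b) (hbc : T.Adj b c) (hcd : T.Adj c d)
    (hac : a ≠ c) (had : a ≠ d) (hbd : b ≠ d) :
    ∀ w, w ≠ b → w ≠ c → 3 ≤ T.dist w a ∨ 3 ≤ T.dist w d := by
  intro w hwb hwc
  by_contra hcon
  push_neg at hcon
  obtain ⟨h1, h2⟩ := hcon
  obtain ⟨p, hp⟩ := hT.isConnected.exists_walk_length_eq_dist w a
  obtain ⟨q, hq⟩ := hT.isConnected.exists_walk_length_eq_dist w d
  have hp2 : p.length ≤ 2 := by omega
  have hq2 : q.length ≤ 2 := by omega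
  -- the explicit path a-b-c-d
  have hP0 : (SimpleGraph.Walk.cons hab (SimpleGraph.Walk.cons hbc
      (SimpleGraph.Walk.cons hcd SimpleGraph.Walk.nil)) : T.Walk a d).IsPath := by
    simp [SimpleGraph.Walk.isPath_def, hab.ne, hbc.ne, hcd.ne, hac, had, hbd]
  set r := (p.reverse.append q).bypass with hr
  have hrP : r.IsPath := SimpleGraph.Walk.bypass_isPath _
  obtain ⟨P, _, hPu⟩ := hT.existsUnique_path a d
  have hreq : r = SimpleGraph.Walk.cons hab (SimpleGraph.Walk.cons hbc
      (SimpleGraph.Walk.cons hcd SimpleGraph.Walk.nil)) := (hPu _ hrP).trans (hPu _ hP0).symm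
  have hmem : ∀ z : Fin n, z ∈ r.support → z ∈ p.support ∨ z ∈ q.support := by
    intro z hz
    have := SimpleGraph.Walk.support_bypass_subset _ hz
    rw [SimpleGraph.Walk.mem_support_append_iff] at this
    rcases this with h | h
    · left; rw [SimpleGraph.Walk.support_reverse, List.mem_reverse] at h; exact h
    · right; exact h
  have hbsup : b ∈ p.support ∨ b ∈ q.support := by
    apply hmem; rw [hreq]; simp
  have hcsup : c ∈ p.support ∨ c ∈ q.support := by
    apply hmem; rw [hreq]; simp
  have hwbadj : T.Adj w b := by
    rcases hbsup with h | h
    · exact adj_of_mem_support_short p hp2 h (Ne.symm hwb) (fun hba => hab.ne hba.symm)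
    · exact adj_of_mem_support_short q hq2 h (Ne.symm hwb) hbd
  have hwcadj : T.Adj w c := by
    rcases hcsup with h | h
    · exact adj_of_mem_support_short p hp2 h (Ne.symm hwc) (fun hca => hac hca.symm)
    · exact adj_of_mem_support_short q hq2 h (Ne.symm hwc) (fun hcd' => hcd.ne hcd')
  exact no_path2_adj hT hwbadj hbc hwcadj

open Classical in
lemma dist_sum_bound {n : ℕ} {T : SimpleGraph (Fin n)} (hT : T.IsTree) {a b c d : Fin n}
    (hab : T.Adj a b) (hbc : T.Adj b c) (hcd : T.Adj c d)
    (hac : a ≠ c) (had : a ≠ d) (hbd : b ≠ d) :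
    2*n*n ≤ (∑ p : Fin n × Fin n, T.dist p.1 p.2) + 2*n + 4 := by
  have hkey := tree_key hT hab hbc hcd hac had hbd
  have hadist : 3 ≤ T.dist a d := by
    rcases hkey a hab.ne (Ne.symm (fun h => hac h.symm)) with h | h
    · rw [SimpleGraph.dist_self] at h; omega
    · exact h
  -- base function
  set base : Fin n → Fin n → ℕ :=
    fun i j => if i = j then 0 else if T.Adj i j then 1 else 2 with hbase
  -- the special pair sets
  set W1 : Finset (Fin n) := univ.filter (fun w => w ≠ b ∧ w ≠ c ∧ 3 ≤ T.dist w d) with hW1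
  set W2 : Finset (Fin n) :=
    univ.filter (fun w => w ≠ b ∧ w ≠ c ∧ w ≠ d ∧ ¬ 3 ≤ T.dist w d) with hW2
  set Q : Finset (Fin n × Fin n) :=
    W1.image (fun w => (w, d)) ∪ W2.image (fun w => (a, w)) with hQ
  set Q' : Finset (Fin n × Fin n) := Q ∪ Q.image Prod.swap with hQ'
  have hQdist : ∀ p ∈ Q, 3 ≤ T.dist p.1 p.2 := by
    intro p hp
    rw [hQ, Finset.mem_union] at hp
    rcases hp with hp | hp
    · obtain ⟨w, hw, rfl⟩ := Finset.mem_image.mp hp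
      rw [hW1, Finset.mem_filter] at hw
      exact hw.2.2.2
    · obtain ⟨w, hw, rfl⟩ := Finset.mem_image.mp hp
      rw [hW2, Finset.mem_filter] at hw
      rcases hkey w hw.2.1 hw.2.2.1 with h | h
      · rwa [SimpleGraph.dist_comm]
      · exact absurd h hw.2.2.2.2
  have hQ'dist : ∀ p ∈ Q', 3 ≤ T.dist p.1 p.2 := by
    intro p hp
    rw [hQ', Finset.mem_union] at hp
    rcases hp with hp | hp
    · exact hQdist p hp
    · obtain ⟨q, hq, rfl⟩ := Finset.mem_image.mp hp
      rw [SimpleGraph.dist_comm]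
      exact hQdist q hq
  -- cardinality of Q'
  have hW12 : Disjoint W1 W2 := by
    rw [Finset.disjoint_left]
    intro w h1 h2
    rw [hW1, Finset.mem_filter] at h1
    rw [hW2, Finset.mem_filter] at h2
    exact h2.2.2.2.2 h1.2.2.2
  have hcover : (univ : Finset (Fin n)) ⊆ (W1 ∪ W2) ∪ {b, c, d} := by
    intro w _
    by_cases hwb : w = b
    · subst hwb; simp
    by_cases hwc : w = c
    · subst hwc; simp
    by_cases hwd : w = d
    · subst hwd; simp
    by_cases h3 : 3 ≤ T.dist w d
    · apply Finset.mem_union_left; apply Finset.mem_union_left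
      rw [hW1, Finset.mem_filter]; exact ⟨Finset.mem_univ _, hwb, hwc, h3⟩
    · apply Finset.mem_union_left; apply Finset.mem_union_right
      rw [hW2, Finset.mem_filter]; exact ⟨Finset.mem_univ _, hwb, hwc, hwd, h3⟩
  have hncard : n ≤ W1.card + W2.card + 3 := by
    have h1 := Finset.card_le_card hcover
    have h2 := Finset.card_union_le (W1 ∪ W2) ({b, c, d} : Finset (Fin n))
    have h3 := Finset.card_union_le W1 W2
    have h4 : ({b, c, d} : Finset (Fin n)).card ≤ 3 := by
      apply le_trans (Finset.card_insert_le _ _)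
      simp [Finset.card_insert_le]
      have := Finset.card_insert_le c ({d} : Finset (Fin n))
      simp at this ⊢; omega
    simp only [Finset.card_univ, Fintype.card_fin] at h1
    omega
  have hQcard : W1.card + W2.card ≤ Q.card := by
    rw [hQ]
    rw [Finset.card_union_of_disjoint]
    · rw [Finset.card_image_of_injective _ (fun x y h => (Prod.mk.injEq _ _ _ _).mp h |>.1),
        Finset.card_image_of_injective _ (fun x y h => (Prod.mk.injEq _ _ _ _).mp h |>.2)]
    · rw [Finset.disjoint_left]
      rintro ⟨p1, p2⟩ h1 h2
      obtain ⟨w, hw, heq⟩ := Finset.mem_image.mp h1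
      obtain ⟨w', hw', heq'⟩ := Finset.mem_image.mp h2
      rw [hW1, Finset.mem_filter] at hw
      rw [hW2, Finset.mem_filter] at hw'
      have e1 : p2 = d := ((Prod.mk.injEq _ _ _ _).mp heq |>.2).symm
      have e2 : p2 = w' := ((Prod.mk.injEq _ _ _ _).mp heq' |>.2).symm
      exact hw'.2.2.2.1 (e2 ▸ e1 : w' = d)
  have hQswap : Disjoint Q (Q.image Prod.swap) := by
    have hmemQ : ∀ p : Fin n × Fin n, p ∈ Q →
        (∃ w ∈ W1, p = (w, d)) ∨ (∃ w ∈ W2, p = (a, w)) := by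
      intro p hp
      rw [hQ, Finset.mem_union] at hp
      rcases hp with hp | hp
      · obtain ⟨w, hw, heq⟩ := Finset.mem_image.mp hp
        exact Or.inl ⟨w, hw, heq.symm⟩
      · obtain ⟨w, hw, heq⟩ := Finset.mem_image.mp hp
        exact Or.inr ⟨w, hw, heq.symm⟩
    have hW1d : ∀ w ∈ W1, w ≠ d := by
      intro w hw
      rw [hW1, Finset.mem_filter] at hw
      intro h
      have := hw.2.2.2
      rw [h, SimpleGraph.dist_self] at this
      omega
    have hW2a : ∀ w ∈ W2, w ≠ a := by
      intro w hw
      rw [hW2, Finset.mem_filter] at hw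
      intro h
      exact hw.2.2.2.2 (h ▸ hadist)
    rw [Finset.disjoint_left]
    intro p hp hp'
    obtain ⟨q, hq, hqe⟩ := Finset.mem_image.mp hp'
    rcases hmemQ p hp with ⟨w, hw, rfl⟩ | ⟨w, hw, rfl⟩ <;>
      rcases hmemQ q hq with ⟨w', hw', rfl⟩ | ⟨w', hw', rfl⟩ <;>
      simp only [Prod.swap_prod_mk, Prod.mk.injEq] at hqe
    · exact hW1d w hw hqe.1.symm
    · exact had hqe.2
    · exact had hqe.1.symm
    · exact hW2a w' hw' hqe.1
  have hQ'card : 2*(W1.card + W2.card) ≤ Q'.card := by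
    rw [hQ', Finset.card_union_of_disjoint hQswap,
      Finset.card_image_of_injective _ Prod.swap_injective]
    omega
  -- base row sums
  have hrow : ∀ i : Fin n, (∑ j, base i j) + (∑ j, (if T.Adj i j then 1 else 0)) + 2 = 2*n := by
    intro i
    have h1e : ∀ j : Fin n, ((if i = j then (0:ℕ) else 2) + (if i = j then 2 else 0)) = 2 :=
      fun j => by by_cases h : i = j <;> simp [h]
    have h1 : (∑ j : Fin n, ((if i = j then (0:ℕ) else 2) + (if i = j then 2 else 0))) = 2*n := by
      rw [Finset.sum_congr rfl (fun j _ => h1e j)]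
      simp [Finset.sum_const, Finset.card_univ, mul_comm]
    have h2 : (∑ j : Fin n, (if i = j then (2:ℕ) else 0)) = 2 := by
      simp
    have h3 : (∑ j, base i j) + (∑ j, (if T.Adj i j then 1 else 0))
        = ∑ j : Fin n, (if i = j then (0:ℕ) else 2) := by
      rw [← Finset.sum_add_distrib]
      apply Finset.sum_congr rfl
      intro j _
      rw [hbase]
      by_cases h : i = j
      · simp [h, T.irrefl]
      · by_cases h' : T.Adj i j <;> simp [h, h']
    rw [Finset.sum_add_distrib] at h1
    omega
  have hdeg : ∀ i : Fin n, (∑ j, (if T.Adj i j then (1:ℕ) else 0)) = T.degree i := by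
    intro i
    rw [SimpleGraph.degree, SimpleGraph.neighborFinset_eq_filter]
    rw [Finset.sum_boole]
    simp
  have hdegsum : (∑ i, T.degree i) + 2 = 2*n := by
    rw [SimpleGraph.sum_degrees_eq_twice_card_edges]
    have := hT.card_edgeFinset
    rw [Fintype.card_fin] at this
    omega
  have hpoint : ∀ p : Fin n × Fin n,
      base p.1 p.2 + (if p ∈ Q' then 1 else 0) ≤ T.dist p.1 p.2 := by
    rintro ⟨i, j⟩
    have hble : base i j ≤ 2 := by
      rw [hbase]
      by_cases h : i = j
      · simp [h]
      · by_cases h' : T.Adj i j <;> simp [h, h']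
    by_cases hq : (i, j) ∈ Q'
    · have h3 := hQ'dist _ hq
      simp only [hq, if_true]
      simp only at h3
      omega
    · simp only [hq, if_false, add_zero]
      rw [hbase]
      by_cases hij : i = j
      · simp [hij]
      · have h0 := hT.isConnected.pos_dist_of_ne hij
        by_cases hadj : T.Adj i j
        · simp only [hij, if_false, hadj, if_true]
          omega
        · simp only [hij, if_false, hadj]
          have h1 : T.dist i j ≠ 1 := fun h => hadj (SimpleGraph.dist_eq_one_iff_adj.mp h)
          omega
  have hsum : (∑ p : Fin n × Fin n, (base p.1 p.2 + if p ∈ Q' then 1 else 0))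
      ≤ ∑ p : Fin n × Fin n, T.dist p.1 p.2 :=
    Finset.sum_le_sum (fun p _ => hpoint p)
  rw [Finset.sum_add_distrib] at hsum
  have hindsum : (∑ p : Fin n × Fin n, if p ∈ Q' then (1:ℕ) else 0) = Q'.card := by
    rw [Finset.sum_boole]
    simp [Finset.filter_mem_eq_inter]
  have hbasesum : (∑ p : Fin n × Fin n, base p.1 p.2) = ∑ i, ∑ j, base i j :=
    Fintype.sum_prod_type _
  have hBD : (∑ i, ∑ j, base i j) + (∑ i, T.degree i) + 2*n = 2*n*n := by
    have := Finset.sum_congr rfl (fun i (_ : i ∈ (univ : Finset (Fin n))) => (hrow i))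
    rw [Finset.sum_add_distrib, Finset.sum_add_distrib] at this
    simp only [Finset.sum_const, Finset.card_univ, Fintype.card_fin, smul_eq_mul] at this
    have hd : ∀ i : Fin n, (∑ j, (if T.Adj i j then (1:ℕ) else 0)) = T.degree i := hdeg
    rw [Finset.sum_congr rfl (fun i _ => hd i)] at this
    have h2 : n * (2*n) = 2*n*n := by ring
    rw [h2] at this
    generalize hM : 2*n*n = M at this ⊢
    omega
  rw [hindsum, hbasesum] at hsum
  generalize hM : 2*n*n = M at hBD ⊢
  omega

lemma walk_head3 {n : ℕ} {T : SimpleGraph (Fin n)} {u v : Fin n} (P : T.Walk u v)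
    (hpath : P.IsPath) (hlen : 3 ≤ P.length) :
    ∃ a b c d : Fin n, T.Adj a b ∧ T.Adj b c ∧ T.Adj c d ∧
      a ≠ b ∧ a ≠ c ∧ a ≠ d ∧ b ≠ c ∧ b ≠ d ∧ c ≠ d := by
  cases P with
  | nil => simp at hlen
  | cons h1 q =>
    rename_i b
    cases q with
    | nil => simp at hlen
    | cons h2 r =>
      rename_i c
      cases r with
      | nil => simp at hlen
      | cons h3 s =>
        rename_i d
        have hd : d ∈ s.support := s.start_mem_support
        rw [SimpleGraph.Walk.isPath_def] at hpath
        simp only [SimpleGraph.Walk.support_cons, List.nodup_cons, List.mem_cons] at hpath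
        push_neg at hpath
        obtain ⟨⟨hub, huc, hus⟩, ⟨hbc, hbs⟩, hcs, _⟩ := hpath
        exact ⟨u, b, c, d, h1, h2, h3, hub, huc, fun h => hus (h ▸ hd), hbc,
          fun h => hbs (h ▸ hd), fun h => hcs (h ▸ hd)⟩

theorem largest_distance_eigenvalue_tree_lower_bound {n : ℕ}
    (T : SimpleGraph (Fin n)) (hT : T.IsTree) (hd : ∃ u v, 3 ≤ T.dist u v) :
    distEig T 1 ≥ 2 * (n : ℝ) - 2 - 4 / n ∧ distEig T 1 > 2 * (n : ℝ) - 3 := by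
  obtain ⟨u, v, huv⟩ := hd
  obtain ⟨p0, hp0⟩ := hT.isConnected.exists_walk_length_eq_dist u v
  have hlen : 3 ≤ p0.bypass.length := le_trans huv (SimpleGraph.dist_le _)
  obtain ⟨a, b, c, d, hab, hbc, hcd, hab', hac, had, hbc', hbd, hcd'⟩ :=
    walk_head3 p0.bypass (SimpleGraph.Walk.bypass_isPath p0) hlen
  have hcardABCD : ({a, b, c, d} : Finset (Fin n)).card = 4 := by
    rw [Finset.card_insert_of_notMem (by simp [hab', hac, had]),
      Finset.card_insert_of_notMem (by simp [hbc', hbd]),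
      Finset.card_insert_of_notMem (by simp [hcd']), Finset.card_singleton]
  have hn4 : 4 ≤ n := by
    have h := Finset.card_le_univ ({a, b, c, d} : Finset (Fin n))
    rw [hcardABCD] at h
    simpa using h
  have hn0' : (0:ℕ) < n := by omega
  have hn0 : (0:ℝ) < n := by exact_mod_cast hn0'
  have hsum := dist_sum_bound hT hab hbc hcd hac had hbd
  have hones := rayleigh_distEig T (fun _ => (1:ℝ))
  have h1 : (fun _ => (1:ℝ)) ⬝ᵥ (distMatrix T *ᵥ (fun _ => (1:ℝ)))
      = ((∑ p : Fin n × Fin n, T.dist p.1 p.2 : ℕ) : ℝ) := by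
    push_cast [Fintype.sum_prod_type]
    simp [dotProduct, mulVec, distMatrix]
  have h2 : ((fun _ => (1:ℝ)) : Fin n → ℝ) ⬝ᵥ ((fun _ => (1:ℝ)) : Fin n → ℝ) = (n:ℝ) := by
    simp [dotProduct]
  rw [h1, h2] at hones
  have hSn : (2*(n:ℝ)*n) ≤ ((∑ p : Fin n × Fin n, T.dist p.1 p.2 : ℕ) : ℝ) + 2*n + 4 := by
    exact_mod_cast hsum
  have main1 : distEig T 1 ≥ 2*(n:ℝ) - 2 - 4/n := by
    have hmul : (2*(n:ℝ) - 2 - 4/n) * n ≤ distEig T 1 * n := by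
      have he : (2*(n:ℝ) - 2 - 4/n) * n = 2*n*n - 2*n - 4 := by
        field_simp
      rw [he]
      linarith
    exact le_of_mul_le_mul_right hmul hn0
  refine ⟨main1, ?_⟩
  rcases Nat.lt_or_ge n 5 with h5 | h5
  · -- n = 4 case
    have hn : n = 4 := by omega
    subst hn
    have hnadj_ac : ¬ T.Adj a c := fun h => no_path2_adj hT hab hbc h
    have hnadj_bd : ¬ T.Adj b d := fun h => no_path2_adj hT hbc hcd h
    have hpos : ∀ {i j : Fin 4}, i ≠ j → 1 ≤ T.dist i j :=
      fun h => hT.isConnected.pos_dist_of_ne h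
    have h2le : ∀ {i j : Fin 4}, i ≠ j → ¬ T.Adj i j → 2 ≤ T.dist i j := by
      intro i j hne hnadj
      have hp := hpos hne
      have h1' : T.dist i j ≠ 1 := fun h => hnadj (SimpleGraph.dist_eq_one_iff_adj.mp h)
      omega
    have hdad : 3 ≤ T.dist a d := by
      rcases tree_key hT hab hbc hcd hac had hbd a hab' hac with h | h
      · rw [SimpleGraph.dist_self] at h; omega
      · exact h
    have huniv : (Finset.univ : Finset (Fin 4)) = {a, b, c, d} := by
      symm
      apply Finset.eq_univ_of_card
      rw [hcardABCD, Fintype.card_fin]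
    have sum4 : ∀ g : Fin 4 → ℝ, ∑ w, g w = g a + g b + g c + g d := by
      intro g
      rw [huniv]
      rw [show ({a,b,c,d} : Finset (Fin 4))
        = insert a (insert b (insert c ({d} : Finset (Fin 4)))) from rfl]
      rw [Finset.sum_insert (by simp [hab', hac, had]),
        Finset.sum_insert (by simp [hbc', hbd]),
        Finset.sum_insert (by simp [hcd']), Finset.sum_singleton]
      ring
    set x : Fin 4 → ℝ := fun w => if w = a then 3 else if w = d then 3 else 2 with hx
    have hxa : x a = 3 := by simp [hx]
    have hxd : x d = 3 := by simp [hx, Ne.symm had]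
    have hxb : x b = 2 := by simp [hx, Ne.symm hab', hbd]
    have hxc : x c = 2 := by simp [hx, Ne.symm hac, hcd']
    have hxx : x ⬝ᵥ x = 26 := by
      rw [dotProduct, sum4]
      rw [hxa, hxb, hxc, hxd]
      norm_num
    -- distance bounds as reals
    have dab : (1:ℝ) ≤ (T.dist a b : ℝ) := by exact_mod_cast hpos hab'
    have dba : (1:ℝ) ≤ (T.dist b a : ℝ) := by rwa [SimpleGraph.dist_comm] at dab
    have dbc : (1:ℝ) ≤ (T.dist b c : ℝ) := by exact_mod_cast hpos hbc'
    have dcb : (1:ℝ) ≤ (T.dist c b : ℝ) := by rwa [SimpleGraph.dist_comm] at dbc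
    have dcd : (1:ℝ) ≤ (T.dist c d : ℝ) := by exact_mod_cast hpos hcd'
    have ddc : (1:ℝ) ≤ (T.dist d c : ℝ) := by rwa [SimpleGraph.dist_comm] at dcd
    have dac : (2:ℝ) ≤ (T.dist a c : ℝ) := by exact_mod_cast h2le hac hnadj_ac
    have dca : (2:ℝ) ≤ (T.dist c a : ℝ) := by rwa [SimpleGraph.dist_comm] at dac
    have dbd : (2:ℝ) ≤ (T.dist b d : ℝ) := by exact_mod_cast h2le hbd hnadj_bd
    have ddb : (2:ℝ) ≤ (T.dist d b : ℝ) := by rwa [SimpleGraph.dist_comm] at dbd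
    have dad : (3:ℝ) ≤ (T.dist a d : ℝ) := by exact_mod_cast hdad
    have dda : (3:ℝ) ≤ (T.dist d a : ℝ) := by rwa [SimpleGraph.dist_comm] at dad
    have daa : ((T.dist a a : ℕ) : ℝ) = 0 := by simp
    have dbb : ((T.dist b b : ℕ) : ℝ) = 0 := by simp
    have dcc : ((T.dist c c : ℕ) : ℝ) = 0 := by simp
    have ddd : ((T.dist d d : ℕ) : ℝ) = 0 := by simp
    have hexp : x ⬝ᵥ (distMatrix T *ᵥ x) = ∑ i, ∑ j, x i * (T.dist i j : ℝ) * x j := by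
      simp only [dotProduct, mulVec, distMatrix]
      apply Finset.sum_congr rfl
      intro i _
      rw [Finset.mul_sum]
      apply Finset.sum_congr rfl
      intro j _
      ring
    have hDx : (134:ℝ) ≤ x ⬝ᵥ (distMatrix T *ᵥ x) := by
      rw [hexp]
      simp only [sum4]
      rw [hxa, hxb, hxc, hxd, daa, dbb, dcc, ddd]
      linarith [dab, dba, dbc, dcb, dcd, ddc, dac, dca, dbd, ddb, dad, dda]
    have hray := rayleigh_distEig T x
    rw [hxx] at hray
    have hlam : (134:ℝ) ≤ distEig T 1 * 26 := le_trans hDx hray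
    push_cast
    norm_num
    linarith
  · -- n ≥ 5
    have h4n : 4/(n:ℝ) < 1 := by
      rw [div_lt_one hn0]
      exact_mod_cast (by omega : 4 < n)
    calc 2*(n:ℝ) - 3 < 2*n - 2 - 4/n := by linarith
    _ ≤ distEig T 1 := main1
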